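/- Let G and H be finite simple graphs, each with at least one vertex, and let ρ_G, ρ_H > 0 be such that G has congestion at most ρ_G and H has congestion at most ρ_H. Then the Cartesian (box) product G □ H has congestion at most max(ρ_G, ρ_H). -/

import Mathlib

open Set Pointwise

noncomputable section

open scoped Classical in
/-- The number of times a walk traverses the vertex `u` immediately followed by `v`. -/
noncomputable def dartCount {V : Type*} {G : SimpleGraph V} {s t : V}
    (p : G.Walk s t) (u v : V) : ℕ :=
  (p.darts.filter (fun dr => dr.toProd = (u, v))).length

/-- A routing of a graph `G`: for each ordered pair `(s,t)` of distinct vertices, a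
finitely supported weight function with nonnegative values summing to `1` on the walks
from `s` to `t`. -/
def IsRouting {V : Type*} (G : SimpleGraph V)
    (w : ∀ s t : V, G.Walk s t → ℝ) : Prop :=
  ∀ s t : V, s ≠ t →
    (∀ p, 0 ≤ w s t p) ∧ {p | w s t p ≠ 0}.Finite ∧ ∑ᶠ p, w s t p = 1

/-- The flow of a routing through an ordered pair `(u,v)`: the sum over all ordered pairs
`(s,t)` of distinct vertices and all walks `p` from `s` to `t` of the weight of `p` times
the number of times `p` traverses `u` immediately followed by `v`. -/
noncomputable def routingFlow {V : Type*} (G : SimpleGraph V)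
    (w : ∀ s t : V, G.Walk s t → ℝ) (u v : V) : ℝ :=
  ∑ᶠ s, ∑ᶠ t, ∑ᶠ _ : s ≠ t, ∑ᶠ p : G.Walk s t, w s t p * (dartCount p u v : ℝ)

/-- A finite graph `G` has congestion at most `ρ` when it admits a routing whose flow
through every ordered pair of adjacent vertices is at most `ρ·|V|`. -/
def HasCongestionAtMost {V : Type*} [Fintype V] (G : SimpleGraph V) (ρ : ℝ) : Prop :=
  ∃ w : ∀ s t : V, G.Walk s t → ℝ, IsRouting G w ∧
    ∀ u v : V, G.Adj u v → routingFlow G w u v ≤ ρ * Fintype.card V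

section Aux
open SimpleGraph
open scoped Classical

variable {α β γ : Type*} {G : SimpleGraph α} {G' : SimpleGraph β} {H : SimpleGraph β}

lemma dartCount_eq_zero_of_length {s t : α} (p : G.Walk s t) (h : p.length = 0) (u v : α) :
    dartCount p u v = 0 := by
  have hd : p.darts = [] := List.eq_nil_of_length_eq_zero (by rw [p.length_darts, h])
  simp [dartCount, hd]

lemma dartCount_append {a b c : α} (p : G.Walk a b) (q : G.Walk b c) (u v : α) :
    dartCount (p.append q) u v = dartCount p u v + dartCount q u v := by
  simp [dartCount, Walk.darts_append, List.filter_append]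

lemma dartCount_map (f : G →g G') {a b : α} (p : G.Walk a b) (u v : β) :
    dartCount (p.map f) u v
      = (p.darts.filter (fun d => (f d.fst, f d.snd) = (u, v))).length := by
  rw [dartCount, Walk.darts_map, List.filter_map, List.length_map]
  congr 1

end Aux

section Aux2
open SimpleGraph
open scoped Classical

variable {α β : Type*} {G : SimpleGraph α} {H : SimpleGraph β}

lemma dartCount_boxProdLeft_G {a b : α} (c : β) (p : G.Walk a b) (u v : α) (y : β) :
    dartCount (Walk.boxProdLeft (H := H) c p) (u, y) (v, y) =
      if c = y then dartCount p u v else 0 := by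
  rw [Walk.boxProdLeft]
  refine (dartCount_map _ p _ _).trans ?_
  by_cases hc : c = y
  · subst hc
    simp only [if_pos rfl, dartCount]
    congr 1
    apply List.filter_congr
    intro d _
    simp [Prod.ext_iff]
  · rw [if_neg hc]
    rw [List.length_eq_zero_iff]
    apply List.filter_eq_nil_iff.2
    intro d _
    simp [Prod.ext_iff, hc]

lemma dartCount_boxProdLeft_H {a b : α} (c : β) (p : G.Walk a b) (x : α) (u v : β)
    (huv : u ≠ v) : dartCount (Walk.boxProdLeft (H := H) c p) (x, u) (x, v) = 0 := by
  rw [Walk.boxProdLeft]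
  refine (dartCount_map _ p _ _).trans ?_
  rw [List.length_eq_zero_iff]
  apply List.filter_eq_nil_iff.2
  intro d _
  simp only [Embedding.coe_toHom, boxProdLeft_apply, decide_eq_true_eq, Prod.mk.injEq]
  rintro ⟨⟨-, rfl⟩, -, hv⟩
  exact huv hv

lemma dartCount_boxProdRight_H {a b : β} (c : α) (q : H.Walk a b) (x : α) (u v : β) :
    dartCount (Walk.boxProdRight G c q) (x, u) (x, v) =
      if c = x then dartCount q u v else 0 := by
  rw [Walk.boxProdRight]
  refine (dartCount_map _ q _ _).trans ?_
  by_cases hc : c = x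
  · subst hc
    simp only [if_pos rfl, dartCount]
    congr 1
    apply List.filter_congr
    intro d _
    simp [Prod.ext_iff]
  · rw [if_neg hc]
    rw [List.length_eq_zero_iff]
    apply List.filter_eq_nil_iff.2
    intro d _
    simp [Prod.ext_iff, hc]

lemma dartCount_boxProdRight_G {a b : β} (c : α) (q : H.Walk a b) (u v : α) (y : β)
    (huv : u ≠ v) : dartCount (Walk.boxProdRight G c q) (u, y) (v, y) = 0 := by
  rw [Walk.boxProdRight]
  refine (dartCount_map _ q _ _).trans ?_
  rw [List.length_eq_zero_iff]
  apply List.filter_eq_nil_iff.2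
  intro d _
  simp only [Embedding.coe_toHom, boxProdRight_apply, decide_eq_true_eq, Prod.mk.injEq]
  rintro ⟨⟨rfl, -⟩, hv, -⟩
  exact huv hv

end Aux2

section Routing
open SimpleGraph
open scoped Classical

variable {α β : Type*}

/-- Extend a routing to also give (trivial) weights for `s = t`. -/
noncomputable def extRouting (G : SimpleGraph α) (w : ∀ s t : α, G.Walk s t → ℝ) :
    ∀ s t : α, G.Walk s t → ℝ :=
  fun s t p => if s = t then (if p.length = 0 then 1 else 0) else w s t p

variable {G : SimpleGraph α} {w : ∀ s t : α, G.Walk s t → ℝ}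

lemma extRouting_nonneg (hw : IsRouting G w) (s t : α) (p : G.Walk s t) :
    0 ≤ extRouting G w s t p := by
  unfold extRouting
  split_ifs with h1 h2
  · exact zero_le_one
  · exact le_refl 0
  · exact (hw s t h1).1 p

lemma extRouting_support_finite (hw : IsRouting G w) (s t : α) :
    {p | extRouting G w s t p ≠ 0}.Finite := by
  unfold extRouting
  by_cases h : s = t
  · subst h
    apply Set.Finite.subset (Set.finite_singleton (Walk.nil : G.Walk s s))
    intro p hp
    simp only [Set.mem_setOf_eq, if_pos rfl] at hp
    have : p.length = 0 := by by_contra hlen; simp [hlen] at hp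
    simpa using Walk.length_eq_zero_iff.1 this
  · simpa [h] using (hw s t h).2.1

lemma extRouting_sum (hw : IsRouting G w) (s t : α) :
    ∑ᶠ p, extRouting G w s t p = 1 := by
  by_cases h : s = t
  · subst h
    rw [finsum_eq_single _ (Walk.nil : G.Walk s s)]
    · simp [extRouting]
    · intro p hp
      have : p.length ≠ 0 := fun hl => hp (Walk.nil_iff_eq_nil.1 (Walk.length_eq_zero_iff.1 hl))
      simp [extRouting, this]
  · have : ∀ p, extRouting G w s t p = w s t p := fun p => by simp [extRouting, h]
    rw [finsum_congr this]
    exact (hw s t h).2.2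

lemma extRouting_mul_dartCount (hw : IsRouting G w) (s t : α) (u v : α) (p : G.Walk s t)
    (hst : s = t) : extRouting G w s t p * (dartCount p u v : ℝ) = 0 := by
  subst hst
  by_cases hl : p.length = 0
  · rw [dartCount_eq_zero_of_length p hl]; simp
  · simp [extRouting, hl]

end Routing

section ProdSec
open SimpleGraph
open scoped Classical

variable {α β : Type*} (G : SimpleGraph α) (H : SimpleGraph β)

/-- Combine a walk in `G` and a walk in `H` into a walk in `G □ H`. -/
noncomputable def combWalk {s₁ t₁ : α} {s₂ t₂ : β} (p : G.Walk s₁ t₁) (q : H.Walk s₂ t₂) :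
    (G □ H).Walk (s₁, s₂) (t₁, t₂) :=
  (Walk.boxProdLeft (H := H) s₂ p).append (Walk.boxProdRight G t₁ q)

variable (wG : ∀ s t : α, G.Walk s t → ℝ) (wH : ∀ s t : β, H.Walk s t → ℝ)

noncomputable def prodRouting : ∀ s t : α × β, (G □ H).Walk s t → ℝ :=
  fun s t r => ∑ᶠ p : G.Walk s.1 t.1, ∑ᶠ q : H.Walk s.2 t.2,
    if combWalk G H p q = r then extRouting G wG s.1 t.1 p * extRouting H wH s.2 t.2 q else 0

variable {G H}

lemma key_eq {s t : α × β} {eG : G.Walk s.1 t.1 → ℝ} {eH : H.Walk s.2 t.2 → ℝ}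
    {SG : Finset (G.Walk s.1 t.1)} {SH : Finset (H.Walk s.2 t.2)}
    (hSG : ∀ p, p ∉ SG → eG p = 0) (hSH : ∀ q, q ∉ SH → eH q = 0)
    (r : (G □ H).Walk s t) :
    (∑ᶠ p, ∑ᶠ q, if combWalk G H p q = r then eG p * eH q else 0)
      = ∑ p ∈ SG, ∑ q ∈ SH, if combWalk G H p q = r then eG p * eH q else 0 := by
  rw [finsum_eq_finset_sum_of_support_subset]
  · refine Finset.sum_congr rfl fun p _ => ?_
    rw [finsum_eq_finset_sum_of_support_subset]
    intro q hq
    simp only [Function.mem_support] at hq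
    by_contra hq'
    rw [Finset.mem_coe] at hq'
    exact hq (by simp [hSH q hq'])
  · intro p hp
    simp only [Function.mem_support] at hp
    by_contra hp'
    rw [Finset.mem_coe] at hp'
    exact hp (finsum_eq_zero_of_forall_eq_zero fun q => by simp [hSG p hp'])

lemma key_sum {s t : α × β} {eG : G.Walk s.1 t.1 → ℝ} {eH : H.Walk s.2 t.2 → ℝ}
    {SG : Finset (G.Walk s.1 t.1)} {SH : Finset (H.Walk s.2 t.2)}
    (hSG : ∀ p, p ∉ SG → eG p = 0) (hSH : ∀ q, q ∉ SH → eH q = 0)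
    (g : (G □ H).Walk s t → ℝ) :
    (∑ᶠ r : (G □ H).Walk s t,
        (∑ᶠ p, ∑ᶠ q, if combWalk G H p q = r then eG p * eH q else 0) * g r)
      = ∑ p ∈ SG, ∑ q ∈ SH, eG p * eH q * g (combWalk G H p q) := by
  set T : Finset ((G □ H).Walk s t) :=
    (SG ×ˢ SH).image (fun pq => combWalk G H pq.1 pq.2) with hT
  rw [finsum_eq_finset_sum_of_support_subset _ (s := T) ?hsupp]
  case hsupp =>
    intro r hr
    simp only [Function.mem_support] at hr
    by_contra hr'
    rw [Finset.mem_coe] at hr'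
    apply hr
    rw [key_eq hSG hSH]
    rw [Finset.sum_eq_zero, zero_mul]
    intro p hp
    apply Finset.sum_eq_zero
    intro q hq
    rw [if_neg]
    intro hcomb
    exact hr' (hcomb ▸ Finset.mem_image.2 ⟨(p, q), Finset.mem_product.2 ⟨hp, hq⟩, rfl⟩)
  calc ∑ r ∈ T, (∑ᶠ p, ∑ᶠ q, if combWalk G H p q = r then eG p * eH q else 0) * g r
      = ∑ r ∈ T, ∑ p ∈ SG, ∑ q ∈ SH,
          (if combWalk G H p q = r then eG p * eH q * g r else 0) := by
        refine Finset.sum_congr rfl fun r _ => ?_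
        rw [key_eq hSG hSH, Finset.sum_mul]
        refine Finset.sum_congr rfl fun p _ => ?_
        rw [Finset.sum_mul]
        refine Finset.sum_congr rfl fun q _ => ?_
        rw [ite_mul, zero_mul]
    _ = ∑ p ∈ SG, ∑ q ∈ SH, ∑ r ∈ T,
          (if combWalk G H p q = r then eG p * eH q * g r else 0) := by
        rw [Finset.sum_comm]
        refine Finset.sum_congr rfl fun p _ => Finset.sum_comm
    _ = ∑ p ∈ SG, ∑ q ∈ SH, eG p * eH q * g (combWalk G H p q) := by
        refine Finset.sum_congr rfl fun p hp => Finset.sum_congr rfl fun q hq => ?_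
        rw [Finset.sum_ite_eq T (combWalk G H p q) (fun r => eG p * eH q * g r),
          if_pos (Finset.mem_image.2 ⟨(p, q), Finset.mem_product.2 ⟨hp, hq⟩, rfl⟩)]

variable {wG wH}

lemma extRouting_not_mem_toFinset (hG : IsRouting G wG) (s t : α) (p : G.Walk s t)
    (hp : p ∉ (extRouting_support_finite hG s t).toFinset) : extRouting G wG s t p = 0 := by
  simpa [Set.Finite.mem_toFinset] using hp

lemma extRouting_sum_toFinset (hG : IsRouting G wG) (s t : α) :
    ∑ p ∈ (extRouting_support_finite hG s t).toFinset, extRouting G wG s t p = 1 := by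
  rw [← extRouting_sum hG s t]
  rw [finsum_eq_finset_sum_of_support_subset]
  intro p hp
  simpa [Set.Finite.mem_toFinset] using hp

lemma prodRouting_isRouting (hG : IsRouting G wG) (hH : IsRouting H wH) :
    IsRouting (G □ H) (prodRouting G H wG wH) := by
  intro s t _
  refine ⟨fun r => ?_, ?_, ?_⟩
  · refine finsum_nonneg fun p => finsum_nonneg fun q => ?_
    split_ifs with h
    · exact mul_nonneg (extRouting_nonneg hG _ _ p) (extRouting_nonneg hH _ _ q)
    · exact le_refl 0
  · set SG := (extRouting_support_finite hG s.1 t.1).toFinset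
    set SH := (extRouting_support_finite hH s.2 t.2).toFinset
    set T : Finset ((G □ H).Walk s t) :=
      (SG ×ˢ SH).image (fun pq => combWalk G H pq.1 pq.2) with hT
    apply Set.Finite.subset T.finite_toSet
    intro r hr
    simp only [Set.mem_setOf_eq] at hr
    by_contra hr'
    rw [Finset.mem_coe] at hr'
    apply hr
    rw [prodRouting, key_eq (extRouting_not_mem_toFinset hG s.1 t.1)
      (extRouting_not_mem_toFinset hH s.2 t.2)]
    refine Finset.sum_eq_zero fun p hp => Finset.sum_eq_zero fun q hq => ?_
    rw [if_neg]
    intro hcomb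
    exact hr' (hcomb ▸ Finset.mem_image.2 ⟨(p, q), Finset.mem_product.2 ⟨hp, hq⟩, rfl⟩)
  · have h1 : ∀ r : (G □ H).Walk s t, prodRouting G H wG wH s t r
        = prodRouting G H wG wH s t r * (fun _ : (G □ H).Walk s t => (1:ℝ)) r := by
      intro r; simp
    rw [finsum_congr h1]
    simp only [prodRouting]
    rw [key_sum (extRouting_not_mem_toFinset hG s.1 t.1)
      (extRouting_not_mem_toFinset hH s.2 t.2)]
    have : ∀ p ∈ (extRouting_support_finite hG s.1 t.1).toFinset,
        ∑ q ∈ (extRouting_support_finite hH s.2 t.2).toFinset,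
          extRouting G wG s.1 t.1 p * extRouting H wH s.2 t.2 q *
            (fun _ => (1:ℝ)) (combWalk G H p q)
        = extRouting G wG s.1 t.1 p := by
      intro p _
      simp only [mul_one]
      rw [← Finset.mul_sum, extRouting_sum_toFinset hH, mul_one]
    rw [Finset.sum_congr rfl this, extRouting_sum_toFinset hG]

lemma inner_flow_left (hG : IsRouting G wG) (hH : IsRouting H wH) (u v : α) (y : β)
    (huv : u ≠ v) (s t : α × β) :
    (∑ᶠ r : (G □ H).Walk s t,
        prodRouting G H wG wH s t r * (dartCount r (u, y) (v, y) : ℝ))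
      = if s.2 = y then
          (if s.1 = t.1 then 0
            else ∑ᶠ p : G.Walk s.1 t.1, wG s.1 t.1 p * (dartCount p u v : ℝ))
        else 0 := by
  simp only [prodRouting]
  rw [key_sum (extRouting_not_mem_toFinset hG s.1 t.1) (extRouting_not_mem_toFinset hH s.2 t.2)]
  have hdc : ∀ (p : G.Walk s.1 t.1) (q : H.Walk s.2 t.2),
      ((dartCount (combWalk G H p q) (u, y) (v, y) : ℝ))
        = if s.2 = y then (dartCount p u v : ℝ) else 0 := by
    intro p q
    rw [combWalk, dartCount_append, dartCount_boxProdLeft_G,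
      dartCount_boxProdRight_G t.1 q u v y huv, Nat.add_zero]
    split_ifs <;> simp
  simp only [hdc]
  by_cases hy : s.2 = y
  · rw [if_pos hy]
    simp only [if_pos hy]
    by_cases hst : s.1 = t.1
    · rw [if_pos hst]
      refine Finset.sum_eq_zero fun p _ => Finset.sum_eq_zero fun q _ => ?_
      calc extRouting G wG s.1 t.1 p * extRouting H wH s.2 t.2 q * (dartCount p u v : ℝ)
          = (extRouting G wG s.1 t.1 p * (dartCount p u v : ℝ)) * extRouting H wH s.2 t.2 q := by
            ring
        _ = 0 := by rw [extRouting_mul_dartCount hG s.1 t.1 u v p hst, zero_mul]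
    · rw [if_neg hst]
      have step : ∀ p ∈ (extRouting_support_finite hG s.1 t.1).toFinset,
          ∑ q ∈ (extRouting_support_finite hH s.2 t.2).toFinset,
            extRouting G wG s.1 t.1 p * extRouting H wH s.2 t.2 q * (dartCount p u v : ℝ)
          = wG s.1 t.1 p * (dartCount p u v : ℝ) := by
        intro p _
        calc ∑ q ∈ (extRouting_support_finite hH s.2 t.2).toFinset,
            extRouting G wG s.1 t.1 p * extRouting H wH s.2 t.2 q * (dartCount p u v : ℝ)
            = ∑ q ∈ (extRouting_support_finite hH s.2 t.2).toFinset,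
              (extRouting G wG s.1 t.1 p * (dartCount p u v : ℝ)) * extRouting H wH s.2 t.2 q := by
              refine Finset.sum_congr rfl fun q _ => by ring
          _ = (extRouting G wG s.1 t.1 p * (dartCount p u v : ℝ)) *
              ∑ q ∈ (extRouting_support_finite hH s.2 t.2).toFinset,
                extRouting H wH s.2 t.2 q := by rw [Finset.mul_sum]
          _ = extRouting G wG s.1 t.1 p * (dartCount p u v : ℝ) := by
              rw [extRouting_sum_toFinset hH, mul_one]
          _ = wG s.1 t.1 p * (dartCount p u v : ℝ) := by simp [extRouting, hst]
      rw [Finset.sum_congr rfl step]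
      rw [finsum_eq_finset_sum_of_support_subset]
      intro p hp
      simp only [Function.mem_support] at hp
      rw [Set.Finite.coe_toFinset]
      have hw : wG s.1 t.1 p ≠ 0 := fun h => hp (by rw [h, zero_mul])
      simpa [Set.mem_setOf_eq, extRouting, hst] using hw
  · rw [if_neg hy]
    simp only [if_neg hy, mul_zero]
    exact Finset.sum_eq_zero fun p _ => Finset.sum_eq_zero fun q _ => rfl

lemma inner_flow_right (hG : IsRouting G wG) (hH : IsRouting H wH) (u v : β) (x : α)
    (huv : u ≠ v) (s t : α × β) :
    (∑ᶠ r : (G □ H).Walk s t,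
        prodRouting G H wG wH s t r * (dartCount r (x, u) (x, v) : ℝ))
      = if t.1 = x then
          (if s.2 = t.2 then 0
            else ∑ᶠ q : H.Walk s.2 t.2, wH s.2 t.2 q * (dartCount q u v : ℝ))
        else 0 := by
  simp only [prodRouting]
  rw [key_sum (extRouting_not_mem_toFinset hG s.1 t.1) (extRouting_not_mem_toFinset hH s.2 t.2)]
  have hdc : ∀ (p : G.Walk s.1 t.1) (q : H.Walk s.2 t.2),
      ((dartCount (combWalk G H p q) (x, u) (x, v) : ℝ))
        = if t.1 = x then (dartCount q u v : ℝ) else 0 := by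
    intro p q
    rw [combWalk, dartCount_append, dartCount_boxProdLeft_H s.2 p x u v huv,
      dartCount_boxProdRight_H, Nat.zero_add]
    split_ifs <;> simp
  simp only [hdc]
  by_cases hy : t.1 = x
  · rw [if_pos hy]
    simp only [if_pos hy]
    set B : ℝ := ∑ q ∈ (extRouting_support_finite hH s.2 t.2).toFinset,
      extRouting H wH s.2 t.2 q * (dartCount q u v : ℝ) with hB
    have step : ∀ p ∈ (extRouting_support_finite hG s.1 t.1).toFinset,
        ∑ q ∈ (extRouting_support_finite hH s.2 t.2).toFinset,
          extRouting G wG s.1 t.1 p * extRouting H wH s.2 t.2 q * (dartCount q u v : ℝ)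
        = extRouting G wG s.1 t.1 p * B := by
      intro p _
      rw [hB, Finset.mul_sum]
      refine Finset.sum_congr rfl fun q _ => by ring
    rw [Finset.sum_congr rfl step, ← Finset.sum_mul, extRouting_sum_toFinset hG, one_mul]
    by_cases hst : s.2 = t.2
    · rw [if_pos hst, hB]
      refine Finset.sum_eq_zero fun q _ => ?_
      exact extRouting_mul_dartCount hH s.2 t.2 u v q hst
    · rw [if_neg hst, hB]
      have step2 : ∀ q ∈ (extRouting_support_finite hH s.2 t.2).toFinset,
          extRouting H wH s.2 t.2 q * (dartCount q u v : ℝ)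
            = wH s.2 t.2 q * (dartCount q u v : ℝ) := by
        intro q _; simp [extRouting, hst]
      rw [Finset.sum_congr rfl step2]
      rw [finsum_eq_finset_sum_of_support_subset]
      intro q hq
      simp only [Function.mem_support] at hq
      rw [Set.Finite.coe_toFinset]
      have hw : wH s.2 t.2 q ≠ 0 := fun h => hq (by rw [h, zero_mul])
      simpa [Set.mem_setOf_eq, extRouting, hst] using hw
  · rw [if_neg hy]
    simp only [if_neg hy, mul_zero]
    exact Finset.sum_eq_zero fun p _ => Finset.sum_eq_zero fun q _ => rfl

lemma prodRouting_flow_left [Fintype α] [Fintype β] (hG : IsRouting G wG)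
    (hH : IsRouting H wH) (u v : α) (y : β) (huv : u ≠ v) :
    routingFlow (G □ H) (prodRouting G H wG wH) (u, y) (v, y)
      = (Fintype.card β : ℝ) * routingFlow G wG u v := by
  classical
  set A : α → α → ℝ := fun a b =>
    if a = b then 0 else ∑ᶠ p : G.Walk a b, wG a b p * (dartCount p u v : ℝ) with hA
  have hA0 : ∀ a, A a a = 0 := fun a => by simp [hA]
  have hflow : routingFlow G wG u v = ∑ a : α, ∑ b : α, A a b := by
    rw [routingFlow]
    rw [finsum_eq_sum_of_fintype]
    refine Finset.sum_congr rfl fun a _ => ?_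
    rw [finsum_eq_sum_of_fintype]
    refine Finset.sum_congr rfl fun b _ => ?_
    rw [finsum_eq_if, hA]
    by_cases h : a = b <;> simp [h]
  rw [routingFlow, finsum_eq_sum_of_fintype]
  have step1 : ∀ s : α × β,
      (∑ᶠ t, ∑ᶠ _ : s ≠ t, ∑ᶠ r : (G □ H).Walk s t,
          prodRouting G H wG wH s t r * (dartCount r (u, y) (v, y) : ℝ))
        = ∑ t : α × β, if s.2 = y then A s.1 t.1 else 0 := by
    intro s
    rw [finsum_eq_sum_of_fintype]
    refine Finset.sum_congr rfl fun t _ => ?_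
    rw [finsum_eq_if]
    by_cases hst : s = t
    · subst hst
      simp [hA0]
    · rw [if_pos hst, inner_flow_left hG hH u v y huv s t, hA]
  rw [Finset.sum_congr rfl fun s _ => step1 s]
  rw [Fintype.sum_prod_type]
  have step2 : ∀ s₁ : α, ∀ s₂ : β,
      (∑ t : α × β, if ((s₁, s₂) : α × β).2 = y then A s₁ t.1 else 0)
        = if s₂ = y then ∑ t : α × β, A s₁ t.1 else 0 := by
    intro s₁ s₂
    by_cases h : s₂ = y <;> simp [h]
  simp only [step2]
  have step3 : ∀ s₁ : α,
      (∑ s₂ : β, if s₂ = y then ∑ t : α × β, A s₁ t.1 else 0)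
        = ∑ t : α × β, A s₁ t.1 := by
    intro s₁
    rw [Finset.sum_ite_eq' Finset.univ y (fun _ => ∑ t : α × β, A s₁ t.1)]
    simp
  simp only [step3]
  have step4 : ∀ s₁ : α, (∑ t : α × β, A s₁ t.1)
      = (Fintype.card β : ℝ) * ∑ t₁ : α, A s₁ t₁ := by
    intro s₁
    rw [Fintype.sum_prod_type]
    rw [Finset.mul_sum]
    refine Finset.sum_congr rfl fun t₁ _ => ?_
    have : ∀ b : β, A s₁ ((t₁, b) : α × β).1 = A s₁ t₁ := fun b => rfl
    rw [Finset.sum_congr rfl fun b _ => this b, Finset.sum_const, nsmul_eq_mul, Fintype.card]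
  simp only [step4]
  rw [← Finset.mul_sum, hflow]

lemma prodRouting_flow_right [Fintype α] [Fintype β] (hG : IsRouting G wG)
    (hH : IsRouting H wH) (u v : β) (x : α) (huv : u ≠ v) :
    routingFlow (G □ H) (prodRouting G H wG wH) (x, u) (x, v)
      = (Fintype.card α : ℝ) * routingFlow H wH u v := by
  classical
  set B : β → β → ℝ := fun a b =>
    if a = b then 0 else ∑ᶠ q : H.Walk a b, wH a b q * (dartCount q u v : ℝ) with hB
  have hB0 : ∀ a, B a a = 0 := fun a => by simp [hB]
  have hflow : routingFlow H wH u v = ∑ a : β, ∑ b : β, B a b := by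
    rw [routingFlow]
    rw [finsum_eq_sum_of_fintype]
    refine Finset.sum_congr rfl fun a _ => ?_
    rw [finsum_eq_sum_of_fintype]
    refine Finset.sum_congr rfl fun b _ => ?_
    rw [finsum_eq_if, hB]
    by_cases h : a = b <;> simp [h]
  rw [routingFlow, finsum_eq_sum_of_fintype]
  have step1 : ∀ s : α × β,
      (∑ᶠ t, ∑ᶠ _ : s ≠ t, ∑ᶠ r : (G □ H).Walk s t,
          prodRouting G H wG wH s t r * (dartCount r (x, u) (x, v) : ℝ))
        = ∑ t : α × β, if t.1 = x then B s.2 t.2 else 0 := by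
    intro s
    rw [finsum_eq_sum_of_fintype]
    refine Finset.sum_congr rfl fun t _ => ?_
    rw [finsum_eq_if]
    by_cases hst : s = t
    · subst hst
      simp [hB0]
    · rw [if_pos hst, inner_flow_right hG hH u v x huv s t, hB]
  rw [Finset.sum_congr rfl fun s _ => step1 s]
  have step2 : ∀ s : α × β, (∑ t : α × β, if t.1 = x then B s.2 t.2 else 0)
      = ∑ t₂ : β, B s.2 t₂ := by
    intro s
    rw [Fintype.sum_prod_type]
    have hsw : ∀ t₁ : α,
        (∑ t₂ : β, if ((t₁, t₂) : α × β).1 = x then B s.2 ((t₁, t₂) : α × β).2 else 0)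
          = if t₁ = x then ∑ t₂ : β, B s.2 t₂ else 0 := by
      intro t₁; by_cases h : t₁ = x <;> simp [h]
    rw [Finset.sum_congr rfl fun t₁ _ => hsw t₁,
      Finset.sum_ite_eq' Finset.univ x (fun t₁ => ∑ t₂ : β, B s.2 t₂)]
    simp
  simp only [step2]
  rw [Fintype.sum_prod_type]
  have step3 : (∑ s₁ : α, ∑ s₂ : β, ∑ t₂ : β, B ((s₁, s₂) : α × β).2 t₂)
      = ∑ s₁ : α, ∑ s₂ : β, ∑ t₂ : β, B s₂ t₂ := rfl
  rw [step3, Finset.sum_const, nsmul_eq_mul, hflow, Fintype.card]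

end ProdSec

/-- If `G` has congestion at most `ρ_G` and `H` has congestion at most `ρ_H`, then the
Cartesian (box) product `G □ H` has congestion at most `max ρ_G ρ_H`. -/
theorem boxProd_congestion {V W : Type*} [Fintype V] [Fintype W]
    [Nonempty V] [Nonempty W] (G : SimpleGraph V) (H : SimpleGraph W)
    (ρG ρH : ℝ) (hρG : 0 < ρG) (hρH : 0 < ρH)
    (hG : HasCongestionAtMost G ρG) (hH : HasCongestionAtMost H ρH) :
    HasCongestionAtMost (G □ H) (max ρG ρH) := by
  classical
  obtain ⟨wG, hwG, hflowG⟩ := hG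
  obtain ⟨wH, hwH, hflowH⟩ := hH
  refine ⟨prodRouting G H wG wH, prodRouting_isRouting hwG hwH, ?_⟩
  rintro ⟨u₁, u₂⟩ ⟨v₁, v₂⟩ hadj
  have hcard : (Fintype.card (V × W) : ℝ) = (Fintype.card V : ℝ) * (Fintype.card W : ℝ) := by
    rw [Fintype.card_prod, Nat.cast_mul]
  rcases SimpleGraph.boxProd_adj.1 hadj with ⟨hGadj, heq⟩ | ⟨hHadj, heq⟩
  · simp only at hGadj heq
    subst heq
    rw [prodRouting_flow_left hwG hwH u₁ v₁ u₂ hGadj.ne]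
    calc (Fintype.card W : ℝ) * routingFlow G wG u₁ v₁
        ≤ (Fintype.card W : ℝ) * (ρG * Fintype.card V) :=
          mul_le_mul_of_nonneg_left (hflowG u₁ v₁ hGadj) (Nat.cast_nonneg _)
      _ = ρG * ((Fintype.card V : ℝ) * (Fintype.card W : ℝ)) := by ring
      _ ≤ max ρG ρH * ((Fintype.card V : ℝ) * (Fintype.card W : ℝ)) :=
          mul_le_mul_of_nonneg_right (le_max_left _ _) (by positivity)
      _ = max ρG ρH * Fintype.card (V × W) := by rw [hcard]
  · simp only at hHadj heq
    subst heq
    rw [prodRouting_flow_right hwG hwH u₂ v₂ u₁ hHadj.ne]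
    calc (Fintype.card V : ℝ) * routingFlow H wH u₂ v₂
        ≤ (Fintype.card V : ℝ) * (ρH * Fintype.card W) :=
          mul_le_mul_of_nonneg_left (hflowH u₂ v₂ hHadj) (Nat.cast_nonneg _)
      _ = ρH * ((Fintype.card V : ℝ) * (Fintype.card W : ℝ)) := by ring
      _ ≤ max ρG ρH * ((Fintype.card V : ℝ) * (Fintype.card W : ℝ)) :=
          mul_le_mul_of_nonneg_right (le_max_right _ _) (by positivity)
      _ = max ρG ρH * Fintype.card (V × W) := by rw [hcard]
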